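/- For every positive integer m, with c_1 = 5·2^{m+2} + 3 and c_2 = 3·2^{m+1} + 1, there exists an addition chain for 2^{c_1} − 1 of length c_1 + m + 6 that contains 2^{c_2} − 1 as an element. -/

import Mathlib

/-- An addition chain of length `r` for `n`, given by `a : ℕ → ℕ`. -/
def IsAdditionChain (r : ℕ) (a : ℕ → ℕ) (n : ℕ) : Prop :=
  a 0 = 1 ∧ a r = n ∧ (∀ k, k < r → a k < a (k + 1)) ∧
    ∀ k, 1 ≤ k → k ≤ r → ∃ i j, i < k ∧ j < k ∧ a k = a i + a j

/-- Minimal length of an addition chain for `n`. -/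
noncomputable def addLen (n : ℕ) : ℕ :=
  sInf {r | ∃ a : ℕ → ℕ, IsAdditionChain r a n}

namespace AddChainAux

/-- Last element of a list (default 0). -/
def lastD (l : List ℕ) : ℕ := l.getLastD 0

/-- Valid addition-chain lists (increasing, first element 1). -/
inductive Ch : List ℕ → Prop
  | base : Ch [1]
  | step (l : List ℕ) (x : ℕ) (h : Ch l) (hx : x ∈ l) : Ch (l ++ [lastD l + x])

def addE (x : ℕ) (l : List ℕ) : List ℕ := l ++ [lastD l + x]
def dbl (l : List ℕ) : List ℕ := addE (lastD l) l
def dblN (n : ℕ) (l : List ℕ) : List ℕ := dbl^[n] l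

lemma lastD_append (l : List ℕ) (v : ℕ) : lastD (l ++ [v]) = v := by simp [lastD]

lemma lastD_mem {l : List ℕ} (h : l ≠ []) : lastD l ∈ l := by
  rw [lastD, List.getLastD_eq_getLast?, List.getLast?_eq_getLast h]
  exact List.getLast_mem h

lemma getD_last {l : List ℕ} (h : l ≠ []) : l.getD (l.length - 1) 0 = lastD l := by
  rw [lastD, List.getLastD_eq_getLast?, List.getLast?_eq_getLast h, List.getLast_eq_getElem,
    List.getD_eq_getElem l 0 (by have := List.length_pos_iff.2 h; omega)]
  simp

lemma mem_getD {x : ℕ} {l : List ℕ} (hx : x ∈ l) : ∃ i < l.length, l.getD i 0 = x := by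
  obtain ⟨i, hi, rfl⟩ := List.mem_iff_getElem.1 hx
  exact ⟨i, hi, List.getD_eq_getElem l 0 hi⟩

lemma Ch.ne_nil {l : List ℕ} (h : Ch l) : l ≠ [] := by cases h <;> simp

lemma Ch.one_mem {l : List ℕ} (h : Ch l) : 1 ∈ l := by
  induction h with
  | base => simp
  | step l x h hx ih => exact List.mem_append_left _ ih

lemma Ch.pos {l : List ℕ} (h : Ch l) : ∀ y ∈ l, 0 < y := by
  induction h with
  | base => simp
  | step l x h hx ih =>
    intro y hy
    rcases List.mem_append.1 hy with hy | hy
    · exact ih y hy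
    · have := ih x hx
      simp only [List.mem_singleton] at hy
      omega

lemma Ch.head {l : List ℕ} (h : Ch l) : l.getD 0 0 = 1 := by
  induction h with
  | base => rfl
  | step l x h hx ih =>
    rw [List.getD_append l _ 0 0 (List.length_pos_iff.2 h.ne_nil)]; exact ih

lemma Ch.incr {l : List ℕ} (h : Ch l) : ∀ k, k + 1 < l.length → l.getD k 0 < l.getD (k + 1) 0 := by
  induction h with
  | base => simp
  | step l x h hx ih =>
    intro k hk
    simp only [List.length_append, List.length_singleton] at hk
    rcases lt_or_ge (k + 1) l.length with h1 | h1
    · rw [List.getD_append l _ 0 k (by omega), List.getD_append l _ 0 (k+1) h1]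
      exact ih k h1
    · have hk1 : k + 1 = l.length := by omega
      rw [List.getD_append l _ 0 k (by omega)]
      have h2 : (l ++ [lastD l + x]).getD (k+1) 0 = lastD l + x := by
        rw [hk1, List.getD_eq_getElem _ 0 (by simp)]
        simp
      rw [h2]
      have hkl : k = l.length - 1 := by omega
      rw [hkl, getD_last h.ne_nil]
      have := h.pos x hx
      omega

lemma Ch.sum {l : List ℕ} (h : Ch l) :
    ∀ k, 1 ≤ k → k < l.length →
      ∃ i j, i < k ∧ j < k ∧ l.getD k 0 = l.getD i 0 + l.getD j 0 := by
  induction h with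
  | base => intro k h1 h2; simp at h2; omega
  | step l x h hx ih =>
    intro k h1 hk
    simp only [List.length_append, List.length_singleton] at hk
    rcases lt_or_ge k l.length with h2 | h2
    · obtain ⟨i, j, hi, hj, he⟩ := ih k h1 h2
      exact ⟨i, j, hi, hj, by
        rw [List.getD_append l _ 0 k h2, List.getD_append l _ 0 i (by omega),
          List.getD_append l _ 0 j (by omega)]; exact he⟩
    · have hk1 : k = l.length := by omega
      obtain ⟨i, hi, hix⟩ := mem_getD hx
      have hlen : 0 < l.length := List.length_pos_iff.2 h.ne_nil
      refine ⟨l.length - 1, i, by omega, by omega, ?_⟩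
      have h3 : (l ++ [lastD l + x]).getD k 0 = lastD l + x := by
        rw [hk1, List.getD_eq_getElem _ 0 (by simp)]
        simp
      rw [h3, List.getD_append l _ 0 (l.length - 1) (by omega),
        List.getD_append l _ 0 i (by omega), getD_last h.ne_nil, hix]

lemma Ch.isChain {l : List ℕ} (h : Ch l) :
    IsAdditionChain (l.length - 1) (fun k => l.getD k 0) (lastD l) := by
  have hlen : 0 < l.length := List.length_pos_iff.2 h.ne_nil
  refine ⟨h.head, getD_last h.ne_nil, fun k hk => h.incr k (by omega),
    fun k h1 h2 => h.sum k h1 (by omega)⟩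

lemma Ch.addE {l : List ℕ} (h : Ch l) {x : ℕ} (hx : x ∈ l) : Ch (addE x l) := Ch.step l x h hx

lemma Ch.dbl {l : List ℕ} (h : Ch l) : Ch (dbl l) := h.addE (lastD_mem h.ne_nil)

lemma dblN_succ (n : ℕ) (l : List ℕ) : dblN (n + 1) l = dbl (dblN n l) :=
  Function.iterate_succ_apply' _ _ _

lemma Ch.dblN {l : List ℕ} (h : Ch l) (n : ℕ) : Ch (dblN n l) := by
  induction n with
  | zero => exact h
  | succ n ih => rw [dblN_succ]; exact ih.dbl

lemma lastD_addE (x : ℕ) (l : List ℕ) : lastD (addE x l) = lastD l + x := lastD_append _ _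

lemma lastD_dbl (l : List ℕ) : lastD (dbl l) = 2 * lastD l := by
  rw [dbl, lastD_addE]; ring

lemma lastD_dblN (n : ℕ) (l : List ℕ) : lastD (dblN n l) = 2 ^ n * lastD l := by
  induction n with
  | zero => simp [dblN]
  | succ n ih => rw [dblN_succ, lastD_dbl, ih, pow_succ]; ring

lemma length_addE (x : ℕ) (l : List ℕ) : (addE x l).length = l.length + 1 := by
  simp [addE]

lemma length_dblN (n : ℕ) (l : List ℕ) : (dblN n l).length = l.length + n := by
  induction n with
  | zero => rfl
  | succ n ih => rw [dblN_succ, dbl, length_addE, ih]; omega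

lemma mem_addE {y : ℕ} {l : List ℕ} (h : y ∈ l) (x : ℕ) : y ∈ addE x l :=
  List.mem_append_left _ h

lemma mem_dblN {y : ℕ} {l : List ℕ} (h : y ∈ l) (n : ℕ) : y ∈ dblN n l := by
  induction n with
  | zero => exact h
  | succ n ih => rw [dblN_succ]; exact mem_addE ih _

lemma pow_merge (a b : ℕ) : 2 ^ a * (2 ^ b - 1) + (2 ^ a - 1) = 2 ^ (a + b) - 1 := by
  have h1 : 1 ≤ 2 ^ a := Nat.one_le_two_pow
  have h2 : 1 ≤ 2 ^ b := Nat.one_le_two_pow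
  have h3 : 2 ^ a * (2 ^ b - 1) = 2 ^ (a + b) - 2 ^ a := by
    rw [Nat.mul_sub, mul_one, pow_add]
  have h4 : 2 ^ a ≤ 2 ^ (a + b) := Nat.pow_le_pow_right (by norm_num) (Nat.le_add_right a b)
  omega

/-- Chain for `2 ^ (2 ^ (j+1)) - 1`. -/
def F : ℕ → List ℕ
  | 0 => [1, 2, 3]
  | j + 1 => addE (lastD (F j)) (dblN (2 ^ (j + 1)) (F j))

lemma F_spec (j : ℕ) : Ch (F j) ∧ lastD (F j) = 2 ^ 2 ^ (j + 1) - 1 ∧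
    (F j).length = 2 ^ (j + 1) + j + 1 := by
  induction j with
  | zero =>
    refine ⟨?_, by simp [F, lastD], by simp [F]⟩
    have h1 : Ch [1] := Ch.base
    have h2 : Ch [1, 2] := by
      have := Ch.step [1] 1 h1 (by simp)
      simpa [lastD] using this
    have := Ch.step [1, 2] 1 h2 (by simp)
    simpa [lastD, F] using this
  | succ j ih =>
    obtain ⟨hch, hlast, hlen⟩ := ih
    have hmem : lastD (F j) ∈ dblN (2 ^ (j + 1)) (F j) :=
      mem_dblN (lastD_mem hch.ne_nil) _
    refine ⟨(hch.dblN _).addE hmem, ?_, ?_⟩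
    · rw [F, lastD_addE, lastD_dblN, hlast, pow_merge]
      congr 1
      rw [pow_succ 2 (j+1)]
      ring
    · rw [F, length_addE, length_dblN, hlen, pow_succ 2 (j+1)]
      ring

end AddChainAux

open AddChainAux
theorem stmt12 (m : ℕ) (hm : 0 < m) :
    ∃ a : ℕ → ℕ,
      IsAdditionChain ((5 * 2 ^ (m + 2) + 3) + m + 6) a (2 ^ (5 * 2 ^ (m + 2) + 3) - 1) ∧
      ∃ i ≤ (5 * 2 ^ (m + 2) + 3) + m + 6, a i = 2 ^ (3 * 2 ^ (m + 1) + 1) - 1 := by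
  obtain ⟨hF, hFlast, hFlen⟩ := F_spec m
  set t := 2 ^ (m + 1) with ht
  set c2 := 3 * t + 1 with hc2
  set L1 := addE (lastD (F m)) (dblN t (F m)) with hL1
  set L2 := addE (lastD (F m)) (dblN t L1) with hL2
  set L3 := addE 1 (dbl L2) with hL3
  set L4 := addE (lastD L3) (dblN c2 L3) with hL4
  set L5 := addE (lastD L3) (dblN c2 L4) with hL5
  set L6 := addE (lastD (F m)) (dblN t L5) with hL6
  -- memberships of y := lastD (F m)
  have hy0 : lastD (F m) ∈ F m := lastD_mem hF.ne_nil
  have hy1 : lastD (F m) ∈ L1 := mem_addE (mem_dblN hy0 t) _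
  have hy2 : lastD (F m) ∈ L2 := mem_addE (mem_dblN hy1 t) _
  have hy3 : lastD (F m) ∈ L3 := mem_addE (mem_dblN hy2 1) _
  -- chains
  have hC1 : Ch L1 := (hF.dblN t).addE (mem_dblN hy0 t)
  have hC2 : Ch L2 := (hC1.dblN t).addE (mem_dblN hy1 t)
  have hC3 : Ch L3 := (hC2.dbl).addE (hC2.dbl).one_mem
  have hX3 : lastD L3 ∈ L3 := lastD_mem hC3.ne_nil
  have hX4 : lastD L3 ∈ L4 := mem_addE (mem_dblN hX3 c2) _
  have hC4 : Ch L4 := (hC3.dblN c2).addE (mem_dblN hX3 c2)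
  have hX5 : lastD L3 ∈ L5 := mem_addE (mem_dblN hX4 c2) _
  have hC5 : Ch L5 := (hC4.dblN c2).addE (mem_dblN hX4 c2)
  have hy5 : lastD (F m) ∈ L5 := mem_addE (mem_dblN (mem_addE (mem_dblN hy3 c2) _) c2) _
  have hC6 : Ch L6 := (hC5.dblN t).addE (mem_dblN hy5 t)
  have hX6 : lastD L3 ∈ L6 := mem_addE (mem_dblN hX5 t) _
  -- last-element computations
  have hFl : lastD (F m) = 2 ^ t - 1 := hFlast
  have hl1 : lastD L1 = 2 ^ (t + t) - 1 := by
    rw [hL1, lastD_addE, lastD_dblN, hFl]; exact pow_merge t t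
  have hl2 : lastD L2 = 2 ^ (t + (t + t)) - 1 := by
    rw [hL2, lastD_addE, lastD_dblN, hl1, hFl]; exact pow_merge t (t + t)
  have hl3 : lastD L3 = 2 ^ c2 - 1 := by
    rw [hL3, lastD_addE, lastD_dbl, hl2]
    have h := pow_merge 1 (t + (t + t))
    norm_num at h
    rw [h]
    congr 2
    omega
  have hl4 : lastD L4 = 2 ^ (c2 + c2) - 1 := by
    rw [hL4, lastD_addE, lastD_dblN, hl3]; exact pow_merge c2 c2
  have hl5 : lastD L5 = 2 ^ (c2 + (c2 + c2)) - 1 := by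
    rw [hL5, lastD_addE, lastD_dblN, hl4, hl3]; exact pow_merge c2 (c2 + c2)
  have hl6 : lastD L6 = 2 ^ (t + (c2 + (c2 + c2))) - 1 := by
    rw [hL6, lastD_addE, lastD_dblN, hl5, hFl]; exact pow_merge t (c2 + (c2 + c2))
  -- lengths
  have h2t : 2 ^ (m + 2) = 2 * t := by rw [ht, pow_succ]; ring
  have hlen6 : L6.length = 10 * t + m + 10 := by
    rw [hL6, length_addE, length_dblN, hL5, length_addE, length_dblN, hL4, length_addE,
      length_dblN, hL3, length_addE, dbl, length_addE, hL2, length_addE, length_dblN,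
      hL1, length_addE, length_dblN, hFlen]
    omega
  have hmain := hC6.isChain
  rw [hlen6] at hmain
  have he1 : 10 * t + m + 10 - 1 = (5 * 2 ^ (m + 2) + 3) + m + 6 := by omega
  have he2 : lastD L6 = 2 ^ (5 * 2 ^ (m + 2) + 3) - 1 := by
    rw [hl6]; congr 2; omega
  rw [he1, he2] at hmain
  refine ⟨fun k => L6.getD k 0, hmain, ?_⟩
  obtain ⟨i, hi, hgi⟩ := mem_getD hX6
  rw [hlen6] at hi
  refine ⟨i, by omega, ?_⟩
  show L6.getD i 0 = _
  rw [hgi, hl3]
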